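/- In the polynomial ring R = k[x,y,z] over a field k, let J₁ = (xy) and J₂ = (yz), and I = (x,y,z)². Then J₁ ⊆ I and J₂ ⊆ I are both Aluffi torsion-free, but J₁ ∩ J₂ = (xyz) ⊆ I is not Aluffi torsion-free; specifically (xyz) ∩ I² ≠ (xyz)·I. -/

import Mathlib

open MvPolynomial

namespace AluffiAux

variable (k : Type*) [Field k]

/-- The maximal ideal `(x, y, z)`. -/
noncomputable def M : Ideal (MvPolynomial (Fin 3) k) :=
  Ideal.span {X 0, X 1, X 2}

/-- Total degree of an exponent vector. -/
def Deg (d : Fin 3 →₀ ℕ) : ℕ := ∑ i, d i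

lemma Deg_add (a b : Fin 3 →₀ ℕ) : Deg (a + b) = Deg a + Deg b := by
  simp [Deg, Finset.sum_add_distrib]

lemma Deg_single (i : Fin 3) : Deg (Finsupp.single i 1) = 1 := by
  simp [Deg, Finsupp.single_apply]

lemma one_le_Deg {d : Fin 3 →₀ ℕ} (hd : d ≠ 0) : 1 ≤ Deg d := by
  rcases Nat.eq_zero_or_pos (Deg d) with h | h
  · exfalso; apply hd
    ext i
    have := Finset.sum_eq_zero_iff.mp h i (Finset.mem_univ i)
    simpa using this
  · exact h

variable {k}

lemma X_mem_M (i : Fin 3) : (X i : MvPolynomial (Fin 3) k) ∈ M k := by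
  apply Ideal.subset_span
  fin_cases i <;> simp

lemma coeff_zero_of_mem_M {b : MvPolynomial (Fin 3) k} (hb : b ∈ M k) :
    coeff 0 b = 0 := by
  have h : M k ≤ RingHom.ker (constantCoeff (σ := Fin 3) (R := k)) := by
    rw [M, Ideal.span_le]
    rintro f (rfl | rfl | rfl) <;> simp [RingHom.mem_ker]
  simpa [constantCoeff_eq] using h hb

variable (k)

/-- The ideal of polynomials all of whose monomials have degree at least `n`. -/
noncomputable def S (n : ℕ) : Ideal (MvPolynomial (Fin 3) k) where
  carrier := {f | ∀ d, coeff d f ≠ 0 → n ≤ Deg d}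
  zero_mem' := by intro d hd; simp at hd
  add_mem' := by
    intro a b ha hb d hd
    rw [coeff_add] at hd
    by_cases h1 : coeff d a ≠ 0
    · exact ha d h1
    · push_neg at h1
      exact hb d (by simpa [h1] using hd)
  smul_mem' := by
    intro p f hf d hd
    rw [smul_eq_mul, coeff_mul] at hd
    obtain ⟨⟨d1, d2⟩, hmem, hne⟩ := Finset.exists_ne_zero_of_sum_ne_zero hd
    have h2 : coeff d2 f ≠ 0 := right_ne_zero_of_mul hne
    have hd12 : d1 + d2 = d := Finset.HasAntidiagonal.mem_antidiagonal.mp hmem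
    calc n ≤ Deg d2 := hf d2 h2
      _ ≤ Deg d1 + Deg d2 := Nat.le_add_left _ _
      _ = Deg d := by rw [← Deg_add, hd12]

variable {k}

lemma mem_S_iff {n : ℕ} {f : MvPolynomial (Fin 3) k} :
    f ∈ S k n ↔ ∀ d, coeff d f ≠ 0 → n ≤ Deg d := Iff.rfl

lemma pow_le_S (n : ℕ) : M k ^ n ≤ S k n := by
  induction n with
  | zero => intro f _ d _; exact Nat.zero_le _
  | succ n ih =>
    rw [pow_succ, Ideal.mul_le]
    intro a ha b hb
    rw [mem_S_iff]
    intro d hd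
    rw [coeff_mul] at hd
    obtain ⟨⟨d1, d2⟩, hmem, hne⟩ := Finset.exists_ne_zero_of_sum_ne_zero hd
    have h1 : coeff d1 a ≠ 0 := left_ne_zero_of_mul hne
    have h2 : coeff d2 b ≠ 0 := right_ne_zero_of_mul hne
    have hd12 : d1 + d2 = d := Finset.HasAntidiagonal.mem_antidiagonal.mp hmem
    have hn1 : n ≤ Deg d1 := ih ha d1 h1
    have hd2 : d2 ≠ 0 := by
      rintro rfl
      exact h2 (coeff_zero_of_mem_M hb)
    have := one_le_Deg hd2
    have : Deg d = Deg d1 + Deg d2 := by rw [← Deg_add, hd12]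
    omega

lemma mem_M_pow_iff {n : ℕ} {f : MvPolynomial (Fin 3) k} :
    f ∈ M k ^ n ↔ ∀ d, coeff d f ≠ 0 → n ≤ Deg d := by
  constructor
  · exact fun h => pow_le_S n h
  · intro hf
    rw [← support_sum_monomial_coeff f]
    apply Ideal.sum_mem
    intro d hd
    have hdeg : n ≤ Deg d := hf d (mem_support_iff.mp hd)
    apply Ideal.pow_le_pow_right hdeg
    have hmon : monomial d (coeff d f) = C (coeff d f) * ∏ i, X i ^ d i := by
      rw [monomial_eq]
      congr 1
      exact Finsupp.prod_fintype _ _ (fun i => pow_zero _)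
    rw [hmon]
    apply Ideal.mul_mem_left
    rw [show M k ^ Deg d = ∏ i, M k ^ d i from (Finset.prod_pow_eq_pow_sum _ _ _).symm]
    exact Ideal.prod_mem_prod fun i _ => Ideal.pow_mem_pow (X_mem_M i) (d i)

lemma cancel_XX {f : MvPolynomial (Fin 3) k} {a b : Fin 3} {n : ℕ}
    (h : f * X a * X b ∈ M k ^ n) : f ∈ M k ^ (n - 2) := by
  rw [mem_M_pow_iff] at h ⊢
  intro d hd
  have hc := h (d + Finsupp.single a 1 + Finsupp.single b 1)
    (by rw [coeff_mul_X, coeff_mul_X]; exact hd)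
  rw [Deg_add, Deg_add, Deg_single, Deg_single] at hc
  omega

lemma prime_X3 (i : Fin 3) : Prime (X i : MvPolynomial (Fin 3) k) := by
  let e := ((renameEquiv k (Equiv.swap i 0)).trans (finSuccEquiv k 2)).toRingEquiv.toMulEquiv
  rw [← MulEquiv.prime_iff e]
  have he : e (X i) = Polynomial.X := by
    show (finSuccEquiv k 2) ((renameEquiv k (Equiv.swap i 0)) (X i)) = Polynomial.X
    rw [renameEquiv_apply, rename_X, Equiv.swap_apply_left, finSuccEquiv_X_zero]
  rw [he]
  exact Polynomial.prime_X

lemma span_sq_le (a b : Fin 3) :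
    Ideal.span {(X a : MvPolynomial (Fin 3) k) * X b} ≤ M k ^ 2 := by
  rw [Ideal.span_le, Set.singleton_subset_iff, pow_two]
  exact Ideal.mul_mem_mul (X_mem_M a) (X_mem_M b)

lemma quad (a b : Fin 3) (n : ℕ) (hn : 1 ≤ n) :
    Ideal.span {(X a : MvPolynomial (Fin 3) k) * X b} ⊓ (M k ^ 2) ^ n
      = Ideal.span {(X a : MvPolynomial (Fin 3) k) * X b} * (M k ^ 2) ^ (n - 1) := by
  apply le_antisymm
  · intro f hf
    obtain ⟨hf1, hf2⟩ := Submodule.mem_inf.mp hf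
    obtain ⟨g, rfl⟩ := Ideal.mem_span_singleton.mp hf1
    rw [← pow_mul] at hf2
    have hf2' : g * X a * X b ∈ M k ^ (2 * n) := by
      rw [show g * X a * X b = X a * X b * g by ring]; exact hf2
    have hg : g ∈ M k ^ (2 * n - 2) := cancel_XX hf2'
    rw [Ideal.mem_span_singleton_mul]
    refine ⟨g, ?_, rfl⟩
    rw [← pow_mul, show 2 * (n - 1) = 2 * n - 2 by omega]
    exact hg
  · apply le_inf Ideal.mul_le_left
    calc Ideal.span {(X a : MvPolynomial (Fin 3) k) * X b} * (M k ^ 2) ^ (n - 1)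
        ≤ M k ^ 2 * (M k ^ 2) ^ (n - 1) :=
          Ideal.mul_mono_left (span_sq_le a b)
      _ = (M k ^ 2) ^ n := by
          rw [← pow_succ']
          congr 1
          omega

lemma part3 :
    Ideal.span {(X 0 : MvPolynomial (Fin 3) k) * X 1} ⊓ Ideal.span {X 1 * X 2}
      = Ideal.span {X 0 * X 1 * X 2} := by
  apply le_antisymm
  · intro f hf
    obtain ⟨h1, h2⟩ := Submodule.mem_inf.mp hf
    obtain ⟨g, hg⟩ := Ideal.mem_span_singleton.mp h1
    obtain ⟨h, hh⟩ := Ideal.mem_span_singleton.mp h2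
    have hy : (X 1 : MvPolynomial (Fin 3) k) ≠ 0 := X_ne_zero 1
    have key : X 0 * g = X 2 * h := by
      apply mul_left_cancel₀ hy
      linear_combination hh - hg
    rcases (prime_X3 2).2.2 (X 0) g ⟨h, key⟩ with hz | hz
    · exact absurd (X_dvd_X.mp hz) (by decide)
    · obtain ⟨g1, rfl⟩ := hz
      rw [Ideal.mem_span_singleton]
      exact ⟨g1, by rw [hg]; ring⟩
  · rw [Ideal.span_le, Set.singleton_subset_iff]
    refine Submodule.mem_inf.mpr ⟨?_, ?_⟩
    · exact Ideal.mem_span_singleton.mpr ⟨X 2, by ring⟩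
    · exact Ideal.mem_span_singleton.mpr ⟨X 0, by ring⟩

lemma part4 :
    Ideal.span {(X 0 : MvPolynomial (Fin 3) k) * X 1 * X 2} ⊓ (M k ^ 2) ^ 2
      ≠ Ideal.span {(X 0 : MvPolynomial (Fin 3) k) * X 1 * X 2} * M k ^ 2 := by
  intro hEq
  have hw : (X 0 : MvPolynomial (Fin 3) k) * X 0 * X 1 * X 2
      ∈ Ideal.span {(X 0 : MvPolynomial (Fin 3) k) * X 1 * X 2} ⊓ (M k ^ 2) ^ 2 := by
    refine Submodule.mem_inf.mpr ⟨Ideal.mem_span_singleton.mpr ⟨X 0, by ring⟩, ?_⟩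
    rw [show (X 0 : MvPolynomial (Fin 3) k) * X 0 * X 1 * X 2
        = (X 0 * X 0) * (X 1 * X 2) by ring, pow_two ((M k) ^ 2)]
    exact Ideal.mul_mem_mul
      (by rw [pow_two]; exact Ideal.mul_mem_mul (X_mem_M 0) (X_mem_M 0))
      (by rw [pow_two]; exact Ideal.mul_mem_mul (X_mem_M 1) (X_mem_M 2))
  rw [hEq, Ideal.mem_span_singleton_mul] at hw
  obtain ⟨g, hgI, hg⟩ := hw
  have hxyz : (X 0 : MvPolynomial (Fin 3) k) * X 1 * X 2 ≠ 0 :=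
    mul_ne_zero (mul_ne_zero (X_ne_zero _) (X_ne_zero _)) (X_ne_zero _)
  have hgx : g = X 0 := by
    apply mul_left_cancel₀ hxyz
    linear_combination hg
  subst hgx
  rw [mem_M_pow_iff] at hgI
  have := hgI (Finsupp.single 0 1) (by rw [coeff_X, if_pos rfl]; exact (one_ne_zero : (1 : k) ≠ 0))
  rw [Deg_single] at this
  omega

end AluffiAux

open AluffiAux

/-- In `k[x,y,z]` with `I = (x,y,z)²`: `(xy) ⊆ I` and `(yz) ⊆ I` are Aluffi torsion-free,
`(xy) ∩ (yz) = (xyz)`, but `(xyz) ⊆ I` is not Aluffi torsion-free: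
`(xyz) ∩ I² ≠ (xyz)·I`. -/
theorem intersection_not_aluffi_torsion_free (k : Type*) [Field k] :
    let R := MvPolynomial (Fin 3) k
    let x : R := X 0
    let y : R := X 1
    let z : R := X 2
    let I : Ideal R := (Ideal.span {x, y, z}) ^ 2
    let J₁ : Ideal R := Ideal.span {x * y}
    let J₂ : Ideal R := Ideal.span {y * z}
    (∀ n : ℕ, 1 ≤ n → J₁ ⊓ I ^ n = J₁ * I ^ (n - 1)) ∧
    (∀ n : ℕ, 1 ≤ n → J₂ ⊓ I ^ n = J₂ * I ^ (n - 1)) ∧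
    J₁ ⊓ J₂ = Ideal.span {x * y * z} ∧
    Ideal.span {x * y * z} ⊓ I ^ 2 ≠ Ideal.span {x * y * z} * I := by
  intro R x y z I J₁ J₂
  exact ⟨fun n hn => quad 0 1 n hn, fun n hn => quad 1 2 n hn, part3, part4⟩
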